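/- (Fraenkel's Partition Theorem, irrational case) Let α be irrational with 0 < α < 1, set β = 1 − α, and let α′, β′ be real. Then B(α,α′) and B(β,β′) tile ℕ if and only if 0 ≤ α+α′ ≤ 1, α′+β′ = 0, and kα+α′ is not an integer for any integer k ≥ 2. -/

import Mathlib

/-- The Beatty sequence `B(α,α') = (⌊(n-α')/α⌋)_{n ≥ 1}`, as a set of integers. -/
def beatty (α α' : ℝ) : Set ℤ := {k | ∃ n : ℕ, 1 ≤ n ∧ k = ⌊((n : ℝ) - α') / α⌋}

/-- Two sets of integers tile ℕ if they are disjoint and their union is the positive integers. -/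
def TilesN (S T : Set ℤ) : Prop := Disjoint S T ∧ S ∪ T = {n : ℤ | 1 ≤ n}


/-- Membership in a Beatty set in terms of the ceiling of `k*α+α'`. -/
lemma mem_beatty_iff {α α' : ℝ} (h0 : 0 < α) (h1 : α < 1) {k : ℤ} :
    k ∈ beatty α α' ↔
      1 ≤ ⌈(k : ℝ) * α + α'⌉ ∧ ((⌈(k : ℝ) * α + α'⌉ : ℝ) < (k : ℝ) * α + α' + α) := by
  set a : ℝ := (k : ℝ) * α + α' with ha
  constructor
  · rintro ⟨n, hn1, hk⟩
    have hfl : (k : ℝ) ≤ ((n : ℝ) - α') / α := by rw [hk]; exact Int.floor_le _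
    have hfu : ((n : ℝ) - α') / α < (k : ℝ) + 1 := by rw [hk]; exact Int.lt_floor_add_one _
    have hl : a ≤ (n : ℝ) := by
      have := (le_div_iff₀ h0).mp hfl
      linarith
    have hu : (n : ℝ) < a + α := by
      have := (div_lt_iff₀ h0).mp hfu
      nlinarith
    have hcl : ⌈a⌉ ≤ (n : ℤ) := Int.ceil_le.mpr (by exact_mod_cast hl)
    have hcu : (n : ℤ) ≤ ⌈a⌉ := by
      have h2 : ((n : ℤ) : ℝ) < (⌈a⌉ : ℝ) + 1 := by
        have := Int.le_ceil a
        push_cast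
        linarith
      have := (Int.lt_add_one_iff (a := (n : ℤ)) (b := ⌈a⌉)).mp (by exact_mod_cast h2)
      exact this
    have hne : (n : ℤ) = ⌈a⌉ := le_antisymm hcu hcl
    constructor
    · rw [← hne]; exact_mod_cast hn1
    · rw [← hne]; push_cast; linarith
  · rintro ⟨hc1, hc2⟩
    refine ⟨⌈a⌉.toNat, ?_, ?_⟩
    · omega
    · have hcast : ((⌈a⌉.toNat : ℕ) : ℝ) = (⌈a⌉ : ℝ) := by
        have : (⌈a⌉.toNat : ℤ) = ⌈a⌉ := Int.toNat_of_nonneg (by omega)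
        exact_mod_cast congrArg (fun z : ℤ => (z : ℝ)) this
      rw [hcast]
      symm
      rw [Int.floor_eq_iff]
      have hle : a ≤ (⌈a⌉ : ℝ) := Int.le_ceil a
      constructor
      · rw [le_div_iff₀ h0]; push_cast; linarith
      · rw [div_lt_iff₀ h0]; push_cast; linarith

lemma orbit_dense {α : ℝ} (hirr : Irrational α) (c u v : ℝ) (huv : u < v) (N₀ : ℤ) :
    ∃ N : ℤ, N₀ ≤ N ∧ ∃ K : ℤ, u + K < (N : ℝ) * α + c ∧ (N : ℝ) * α + c < v + K := by
  classical
  obtain ⟨n, hn⟩ := exists_nat_one_div_lt (sub_pos.mpr huv)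
  have hnpos : 0 < n + 1 := Nat.succ_pos n
  obtain ⟨j, q, hq0, hqn, habs⟩ := Real.exists_int_int_abs_mul_sub_le α hnpos
  set ε₀ : ℝ := (q : ℝ) * α - j with hε₀
  have hne : ε₀ ≠ 0 := by
    intro h
    have h2 : (q : ℝ) * α = (j : ℝ) := by rw [hε₀] at h; linarith
    exact (hirr.intCast_mul (by omega : q ≠ 0)).ne_int j h2
  have hlt : |ε₀| < v - u := by
    refine lt_of_le_of_lt habs (lt_of_le_of_lt ?_ hn)
    apply one_div_le_one_div_of_le
    · positivity
    · push_cast; linarith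
  set base : ℝ := (N₀ : ℝ) * α + c with hbase
  have hmq : ∀ m : ℕ, ((N₀ + m * q : ℤ) : ℝ) * α + c = base + (m : ℝ) * ((j : ℝ) + ε₀) := by
    intro m
    rw [hε₀, hbase]
    push_cast
    ring
  rcases lt_or_gt_of_ne hne with hneg | hpos
  · -- ε₀ < 0 : decreasing steps of size ε := -ε₀
    set ε : ℝ := -ε₀ with hεdef
    have hε : 0 < ε := by rw [hεdef]; linarith
    have hεlt : ε < v - u := by rw [abs_of_neg hneg] at hlt; exact hlt
    set K₀ : ℤ := ⌈base - v⌉ - 1 with hK₀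
    have hK₀lt : (K₀ : ℝ) < base - v := by
      have h2 := Int.ceil_lt_add_one (base - v)
      have h3 : (K₀ : ℝ) = (⌈base - v⌉ : ℝ) - 1 := by rw [hK₀]; push_cast; ring
      linarith
    have hex : ∃ m : ℕ, base - (m : ℝ) * ε < v + K₀ := by
      obtain ⟨m, hm⟩ := exists_nat_gt ((base - v - K₀) / ε)
      refine ⟨m, ?_⟩
      rw [div_lt_iff₀ hε] at hm
      nlinarith
    set m : ℕ := Nat.find hex with hm
    have hm1 : base - (m : ℝ) * ε < v + K₀ := Nat.find_spec hex
    have hm0 : m ≠ 0 := by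
      intro h
      have h2 := hm1
      rw [h] at h2
      push_cast at h2
      linarith
    have hm2 : ¬ (base - ((m - 1 : ℕ) : ℝ) * ε < v + K₀) := Nat.find_min hex (by omega)
    push_neg at hm2
    have hmlow : u + K₀ < base - (m : ℝ) * ε := by
      have hc : ((m - 1 : ℕ) : ℝ) = (m : ℝ) - 1 := by
        have h1 : (1 : ℕ) ≤ m := by omega
        push_cast [Nat.cast_sub h1]
        ring
      rw [hc] at hm2
      nlinarith
    have hq0' : (0 : ℤ) ≤ m * q := mul_nonneg (by positivity) (le_of_lt hq0)
    refine ⟨N₀ + m * q, by omega, K₀ + m * j, ?_, ?_⟩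
    · rw [hmq m]
      push_cast
      rw [hεdef] at hmlow
      push_cast at hmlow
      linarith
    · rw [hmq m]
      push_cast
      rw [hεdef] at hm1
      push_cast at hm1
      linarith
  · -- ε₀ > 0 : increasing steps
    have hεlt : ε₀ < v - u := by rw [abs_of_pos hpos] at hlt; exact hlt
    set K₀ : ℤ := ⌊base - u⌋ + 1 with hK₀
    have hK₀gt : base - u < (K₀ : ℝ) := by
      have h2 := Int.lt_floor_add_one (base - u)
      have h3 : (K₀ : ℝ) = (⌊base - u⌋ : ℝ) + 1 := by rw [hK₀]; push_cast; ring
      linarith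
    have hex : ∃ m : ℕ, u + K₀ < base + (m : ℝ) * ε₀ := by
      obtain ⟨m, hm⟩ := exists_nat_gt ((u + K₀ - base) / ε₀)
      refine ⟨m, ?_⟩
      rw [div_lt_iff₀ hpos] at hm
      nlinarith
    set m : ℕ := Nat.find hex with hm
    have hm1 : u + K₀ < base + (m : ℝ) * ε₀ := Nat.find_spec hex
    have hm0 : m ≠ 0 := by
      intro h
      have h2 := hm1
      rw [h] at h2
      push_cast at h2
      linarith
    have hm2 : ¬ (u + K₀ < base + ((m - 1 : ℕ) : ℝ) * ε₀) := Nat.find_min hex (by omega)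
    push_neg at hm2
    have hmhigh : base + (m : ℝ) * ε₀ < v + K₀ := by
      have hc : ((m - 1 : ℕ) : ℝ) = (m : ℝ) - 1 := by
        have h1 : (1 : ℕ) ≤ m := by omega
        push_cast [Nat.cast_sub h1]
        ring
      rw [hc] at hm2
      nlinarith
    have hq0' : (0 : ℤ) ≤ m * q := mul_nonneg (by positivity) (le_of_lt hq0)
    refine ⟨N₀ + m * q, by omega, K₀ + m * j, ?_, ?_⟩
    · rw [hmq m]; push_cast; linarith
    · rw [hmq m]; push_cast; linarith


open Classical in
/-- Counting lemma: the number of elements of `B(α,α')` in `[1,N]`. -/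
lemma beatty_count {α α' : ℝ} (h0 : 0 < α) (h1 : α < 1) (hle : α + α' ≤ 1) {N : ℤ}
    (hN : 1 ≤ N) :
    ((Finset.Icc 1 N).filter (· ∈ beatty α α')).card
      = (⌈((N : ℝ) + 1) * α + α'⌉ - 1).toNat := by
  classical
  set x : ℝ := ((N : ℝ) + 1) * α + α' with hx
  have hcard : (Finset.Icc (1:ℤ) (⌈x⌉ - 1)).card = (⌈x⌉ - 1).toNat := by
    rw [Int.card_Icc]; congr 1; omega
  rw [← hcard]
  refine Finset.card_bij' (fun k _ => ⌈(k : ℝ) * α + α'⌉)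
    (fun n _ => ⌊((n : ℝ) - α') / α⌋) ?_ ?_ ?_ ?_
  · -- maps into
    intro k hk
    rw [Finset.mem_filter, Finset.mem_Icc] at hk
    obtain ⟨⟨hk1, hkN⟩, hkb⟩ := hk
    rw [mem_beatty_iff h0 h1] at hkb
    rw [Finset.mem_Icc]
    refine ⟨hkb.1, ?_⟩
    have h2 : ((⌈(k : ℝ) * α + α'⌉ : ℤ) : ℝ) < x := by
      have : (k : ℝ) * α + α' + α ≤ x := by
        rw [hx]
        have : (k : ℝ) + 1 ≤ (N : ℝ) + 1 := by push_cast; exact_mod_cast add_le_add_left (by exact_mod_cast hkN) 1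
        nlinarith
      linarith [hkb.2]
    have h3 : ((⌈(k : ℝ) * α + α'⌉ : ℤ) : ℝ) < (⌈x⌉ : ℝ) := lt_of_lt_of_le h2 (Int.le_ceil x)
    have h4 : ⌈(k : ℝ) * α + α'⌉ < ⌈x⌉ := by exact_mod_cast h3
    show ⌈(k : ℝ) * α + α'⌉ ≤ ⌈x⌉ - 1
    omega
  · -- inverse maps into
    intro n hn
    rw [Finset.mem_Icc] at hn
    obtain ⟨hn1, hn2⟩ := hn
    have hnx : (n : ℝ) < x := by
      have h2 : (n : ℝ) ≤ (⌈x⌉ : ℝ) - 1 := by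
        have h5 : (n:ℤ) ≤ ⌈x⌉ - 1 := hn2
        have h6 : ((n:ℤ):ℝ) ≤ ((⌈x⌉ - 1 : ℤ):ℝ) := by exact_mod_cast h5
        push_cast at h6
        linarith
      linarith [Int.ceil_lt_add_one x]
    have hna : α + α' ≤ (n : ℝ) := by
      have : (1 : ℝ) ≤ (n : ℝ) := by exact_mod_cast hn1
      linarith
    show ⌊((n : ℝ) - α') / α⌋ ∈ Finset.filter (· ∈ beatty α α') (Finset.Icc 1 N)
    rw [Finset.mem_filter, Finset.mem_Icc]
    refine ⟨⟨?_, ?_⟩, ?_⟩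
    · rw [Int.le_floor]
      rw [le_div_iff₀ h0]
      push_cast
      linarith
    · have h7 : ⌊((n : ℝ) - α') / α⌋ < N + 1 := by
        rw [Int.floor_lt, div_lt_iff₀ h0]
        push_cast
        rw [hx] at hnx
        linarith
      omega
    · exact ⟨n.toNat, by omega, by
        have hcast : ((n.toNat : ℕ) : ℝ) = (n : ℝ) := by
          exact_mod_cast congrArg (fun z : ℤ => (z : ℝ)) (Int.toNat_of_nonneg (by omega))
        rw [hcast]⟩
  · -- left inverse
    intro k hk
    rw [Finset.mem_filter, Finset.mem_Icc] at hk
    obtain ⟨⟨hk1, hkN⟩, hkb⟩ := hk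
    rw [mem_beatty_iff h0 h1] at hkb
    have hle1 : (k : ℝ) * α + α' ≤ (⌈(k : ℝ) * α + α'⌉ : ℝ) := Int.le_ceil _
    show ⌊(((⌈(k : ℝ) * α + α'⌉ : ℤ) : ℝ) - α') / α⌋ = k
    rw [Int.floor_eq_iff]
    constructor
    · rw [le_div_iff₀ h0]; linarith
    · rw [div_lt_iff₀ h0]; push_cast; linarith [hkb.2]
  · -- right inverse
    intro n hn
    rw [Finset.mem_Icc] at hn
    obtain ⟨hn1, hn2⟩ := hn
    set k : ℤ := ⌊((n : ℝ) - α') / α⌋ with hk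
    have h2 : (k : ℝ) ≤ ((n : ℝ) - α') / α := by rw [hk]; exact Int.floor_le _
    have h3 : ((n : ℝ) - α') / α < (k : ℝ) + 1 := by rw [hk]; exact Int.lt_floor_add_one _
    have hl : (k : ℝ) * α + α' ≤ (n : ℝ) := by
      have := (le_div_iff₀ h0).mp h2; linarith
    have hu : (n : ℝ) < (k : ℝ) * α + α' + α := by
      have := (div_lt_iff₀ h0).mp h3; nlinarith
    show ⌈(k : ℝ) * α + α'⌉ = n
    rw [Int.ceil_eq_iff]
    constructor
    · push_cast; linarith
    · exact hl


lemma mem_beatty_of_int {α α' : ℝ} (h0 : 0 < α) (h1 : α < 1) {k z : ℤ}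
    (hz : (k : ℝ) * α + α' = (z : ℝ)) : k ∈ beatty α α' ↔ 1 ≤ z := by
  rw [mem_beatty_iff h0 h1, hz, Int.ceil_intCast]
  exact ⟨fun h => h.1, fun h => ⟨h, by linarith⟩⟩

lemma not_mem_of_nonpos {α β α' β' : ℝ} (h0 : 0 < α) (h1 : α < 1) (hβ : β = 1 - α)
    (hβ' : β' = -α') (hA0 : 0 ≤ α + α') (hA1 : α + α' ≤ 1) {k : ℤ} (hk : k ≤ 0) :
    k ∉ beatty α α' ∧ k ∉ beatty β β' := by
  have hb0 : 0 < β := by rw [hβ]; linarith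
  have hb1 : β < 1 := by rw [hβ]; linarith
  have hkR : (k : ℝ) ≤ 0 := by exact_mod_cast hk
  constructor
  · intro hmem
    rw [mem_beatty_iff h0 h1] at hmem
    obtain ⟨hc1, hc2⟩ := hmem
    have hup : (k : ℝ) * α + α' + α ≤ 1 := by nlinarith
    have h3 : ((⌈(k : ℝ) * α + α'⌉ : ℤ) : ℝ) < 1 := by linarith
    have h4 : ⌈(k : ℝ) * α + α'⌉ < 1 := by exact_mod_cast h3
    omega
  · intro hmem
    rw [mem_beatty_iff hb0 hb1] at hmem
    obtain ⟨hc1, hc2⟩ := hmem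
    have hup : (k : ℝ) * β + β' + β ≤ 1 := by rw [hβ, hβ']; nlinarith
    have h3 : ((⌈(k : ℝ) * β + β'⌉ : ℤ) : ℝ) < 1 := by linarith
    have h4 : ⌈(k : ℝ) * β + β'⌉ < 1 := by exact_mod_cast h3
    omega

lemma mem_iff_not_mem_of_pos {α β α' β' : ℝ} (h0 : 0 < α) (h1 : α < 1)
    (hβ : β = 1 - α) (hβ' : β' = -α') (hA0 : 0 ≤ α + α') (hA1 : α + α' ≤ 1)
    (hni : ∀ k : ℤ, 2 ≤ k → ¬ ∃ z : ℤ, (k : ℝ) * α + α' = (z : ℝ)) {k : ℤ} (hk : 1 ≤ k) :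
    (k ∈ beatty α α' ↔ k ∉ beatty β β') := by
  have hb0 : 0 < β := by rw [hβ]; linarith
  have hb1 : β < 1 := by rw [hβ]; linarith
  have hkR : (1 : ℝ) ≤ (k : ℝ) := by exact_mod_cast hk
  set a : ℝ := (k : ℝ) * α + α' with ha
  have hbval : (k : ℝ) * β + β' = (k : ℝ) - a := by rw [hβ, hβ', ha]; ring
  by_cases hint : ∃ z : ℤ, a = (z : ℝ)
  · -- integer case: forces k = 1 and a ∈ {0,1}
    obtain ⟨z, hz⟩ := hint
    have hk1 : k = 1 := by
      by_contra hne
      exact hni k (by omega) ⟨z, hz.symm ▸ hz⟩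
    have hz0' : (0 : ℤ) ≤ z := by
      have : (0 : ℝ) ≤ (z : ℝ) := by
        rw [← hz, ha, hk1]; push_cast; linarith
      exact_mod_cast this
    have hz1' : z ≤ 1 := by
      have : (z : ℝ) ≤ 1 := by
        rw [← hz, ha, hk1]; push_cast; linarith
      exact_mod_cast this
    have hma : k ∈ beatty α α' ↔ 1 ≤ z := mem_beatty_of_int h0 h1 hz
    have hmb : k ∈ beatty β β' ↔ 1 ≤ k - z := by
      refine mem_beatty_of_int hb0 hb1 ?_
      rw [hbval, hz]; push_cast; ring
    rw [hma, hmb]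
    omega
  · -- non-integer case
    set m : ℤ := ⌊a⌋ with hm
    have hfl : (m : ℝ) ≤ a := Int.floor_le a
    have hfu : a < (m : ℝ) + 1 := Int.lt_floor_add_one a
    have hane : a ≠ (m : ℝ) := fun h => hint ⟨m, h⟩
    have htpos : (m : ℝ) < a := lt_of_le_of_ne hfl (Ne.symm hane)
    -- a ≥ 0 and a < k
    have hage : 0 ≤ a := by rw [ha]; nlinarith
    have halt : a < (k : ℝ) := by
      have h2 : a ≤ (k : ℝ) := by rw [ha]; nlinarith
      have h3 : a ≠ (k : ℝ) := fun h => hint ⟨k, h⟩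
      exact lt_of_le_of_ne h2 h3
    have hm0 : 0 ≤ m := Int.floor_nonneg.mpr hage
    have hmk : m < k := Int.floor_lt.mpr halt
    -- ceilings
    have hca : ⌈a⌉ = m + 1 := by
      rw [Int.ceil_eq_iff]; push_cast; exact ⟨by linarith, by linarith⟩
    have hcb : ⌈(k : ℝ) - a⌉ = k - m := by
      rw [Int.ceil_eq_iff]; push_cast; exact ⟨by linarith, by linarith⟩
    -- t ≠ β
    have htne : a - (m : ℝ) ≠ β := by
      intro h
      refine hni (k + 1) (by omega) ⟨m + 1, ?_⟩
      push_cast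
      rw [ha, hβ] at h
      nlinarith [h]
    have hma : k ∈ beatty α α' ↔ β < a - (m : ℝ) := by
      rw [mem_beatty_iff h0 h1, ← ha, hca]
      constructor
      · rintro ⟨-, h2⟩
        push_cast at h2
        rw [hβ]; linarith
      · intro h2
        rw [hβ] at h2
        exact ⟨by omega, by push_cast; linarith⟩
    have hmb : k ∈ beatty β β' ↔ a - (m : ℝ) < β := by
      rw [mem_beatty_iff hb0 hb1, hbval, hcb]
      constructor
      · rintro ⟨-, h2⟩
        push_cast at h2
        linarith
      · intro h2
        exact ⟨by omega, by push_cast; linarith⟩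
    rw [hma, hmb]
    constructor
    · intro h2 h3; linarith
    · intro h2
      rcases lt_trichotomy (a - (m : ℝ)) β with h | h | h
      · exact absurd h h2
      · exact absurd h htne
      · exact h



theorem forward_dir (α β α' β' : ℝ) (hirr : Irrational α) (h0 : 0 < α) (h1 : α < 1)
    (hβ : β = 1 - α) (ht : TilesN (beatty α α') (beatty β β')) :
    (0 ≤ α + α' ∧ α + α' ≤ 1 ∧ α' + β' = 0 ∧
      ∀ k : ℤ, 2 ≤ k → ¬ ∃ z : ℤ, (k : ℝ) * α + α' = (z : ℝ)) := by
  classical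
  obtain ⟨hdisj, hunion⟩ := ht
  have hb0 : 0 < β := by rw [hβ]; linarith
  have hb1 : β < 1 := by rw [hβ]; linarith
  -- elements of either set are positive
  have hposα : ∀ k : ℤ, k ∈ beatty α α' → 1 ≤ k := by
    intro k hk
    have : k ∈ beatty α α' ∪ beatty β β' := Or.inl hk
    rw [hunion] at this
    exact this
  have hposβ : ∀ k : ℤ, k ∈ beatty β β' → 1 ≤ k := by
    intro k hk
    have : k ∈ beatty α α' ∪ beatty β β' := Or.inr hk
    rw [hunion] at this
    exact this
  -- α + α' ≤ 1
  have hA1 : α + α' ≤ 1 := by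
    have hm : ⌊((1 : ℝ) - α') / α⌋ ∈ beatty α α' := ⟨1, le_refl 1, by norm_num⟩
    have h2 : (1 : ℤ) ≤ ⌊((1 : ℝ) - α') / α⌋ := hposα _ hm
    have h3 : (1 : ℝ) ≤ ((1 : ℝ) - α') / α := by exact_mod_cast Int.le_floor.mp h2
    rw [le_div_iff₀ h0] at h3
    linarith
  have hB1 : β + β' ≤ 1 := by
    have hm : ⌊((1 : ℝ) - β') / β⌋ ∈ beatty β β' := ⟨1, le_refl 1, by norm_num⟩
    have h2 : (1 : ℤ) ≤ ⌊((1 : ℝ) - β') / β⌋ := hposβ _ hm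
    have h3 : (1 : ℝ) ≤ ((1 : ℝ) - β') / β := by exact_mod_cast Int.le_floor.mp h2
    rw [le_div_iff₀ hb0] at h3
    linarith
  -- the counting identity
  set s : ℝ := α' + β' with hs
  set N₁ : ℤ := max 1 (max ⌈(1 - α') / α⌉ ⌈(1 - β') / β⌉) with hN₁
  have hkey : ∀ N : ℤ, N₁ ≤ N →
      ⌈((N : ℝ) + 1) * α + α'⌉ + ⌈((N : ℝ) + 1) * β + β'⌉ = N + 2 := by
    intro N hN
    have hN1 : (1 : ℤ) ≤ N := le_trans (le_max_left _ _) hN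
    -- partition of Icc 1 N
    have hsplit : ((Finset.Icc 1 N).filter (· ∈ beatty α α')).card
        + ((Finset.Icc 1 N).filter (· ∈ beatty β β')).card = N.toNat := by
      have hcongr : (Finset.Icc 1 N).filter (· ∈ beatty β β')
          = (Finset.Icc 1 N).filter (fun k => ¬ k ∈ beatty α α') := by
        apply Finset.filter_congr
        intro k hk
        rw [Finset.mem_Icc] at hk
        constructor
        · intro hkb hka
          exact Set.disjoint_left.mp hdisj hka hkb
        · intro hka
          have h9 : k ∈ beatty α α' ∪ beatty β β' := by
            rw [hunion]; exact hk.1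
          rcases h9 with h9 | h9
          · exact absurd h9 hka
          · exact h9
      rw [hcongr, Finset.card_filter_add_card_filter_not, Int.card_Icc]
      congr 1
      omega
    rw [beatty_count h0 h1 hA1 hN1, beatty_count hb0 hb1 hB1 hN1] at hsplit
    -- positivity of the two ceilings
    have hxge : (1 : ℝ) ≤ ((N : ℝ) + 1) * α + α' := by
      have h2 : (⌈(1 - α') / α⌉ : ℤ) ≤ N := le_trans (le_trans (le_max_left _ _) (le_max_right _ _)) hN
      have h3 : (1 - α') / α ≤ (N : ℝ) := le_trans (Int.le_ceil _) (by exact_mod_cast h2)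
      rw [div_le_iff₀ h0] at h3
      nlinarith
    have hyge : (1 : ℝ) ≤ ((N : ℝ) + 1) * β + β' := by
      have h2 : (⌈(1 - β') / β⌉ : ℤ) ≤ N := le_trans (le_trans (le_max_right _ _) (le_max_right _ _)) hN
      have h3 : (1 - β') / β ≤ (N : ℝ) := le_trans (Int.le_ceil _) (by exact_mod_cast h2)
      rw [div_le_iff₀ hb0] at h3
      nlinarith
    have hcx : (1 : ℤ) ≤ ⌈((N : ℝ) + 1) * α + α'⌉ := by
      rw [Int.le_ceil_iff]; push_cast; linarith
    have hcy : (1 : ℤ) ≤ ⌈((N : ℝ) + 1) * β + β'⌉ := by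
      rw [Int.le_ceil_iff]; push_cast; linarith
    omega
  -- reduce to the ceil identity in terms of s
  have hceil : ∀ N : ℤ, N₁ ≤ N →
      ⌈((N : ℝ) + 1) * α + α'⌉ + ⌈s - (((N : ℝ) + 1) * α + α')⌉ = 1 := by
    intro N hN
    have h2 := hkey N hN
    have hyx : ((N : ℝ) + 1) * β + β' = (s - (((N : ℝ) + 1) * α + α')) + ((N + 1 : ℤ) : ℝ) := by
      rw [hβ, hs]; push_cast; ring
    rw [hyx, Int.ceil_add_intCast] at h2
    omega
  -- s = 0
  have hs0 : s = 0 := by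
    by_contra hne
    -- general bounds : for any N ≥ N₁, using ceil ≥ arg and ceil < arg + 1
    have hbnd : ∀ N : ℤ, N₁ ≤ N → (s ≤ 1 ∧ -1 < s) := by
      intro N hN
      have h2 := hceil N hN
      set x : ℝ := ((N : ℝ) + 1) * α + α' with hx
      have l1 : x ≤ (⌈x⌉ : ℝ) := Int.le_ceil x
      have l2 : s - x ≤ (⌈s - x⌉ : ℝ) := Int.le_ceil _
      have l3 : (⌈x⌉ : ℝ) < x + 1 := Int.ceil_lt_add_one x
      have l4 : (⌈s - x⌉ : ℝ) < s - x + 1 := Int.ceil_lt_add_one _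
      have l5 : ((⌈x⌉ + ⌈s - x⌉ : ℤ) : ℝ) = 1 := by rw [h2]; norm_num
      push_cast at l5
      constructor <;> linarith
    obtain ⟨hsle, hsgt⟩ := hbnd N₁ (le_refl N₁)
    rcases lt_trichotomy s 0 with hneg | hzero | hpos
    · -- -1 < s < 0 : use density with interval (1+s, 1)
      obtain ⟨N, hNge, K, hK1, hK2⟩ :=
        orbit_dense hirr (α + α') (1 + s) 1 (by linarith) N₁
      have hxval : ((N : ℝ) + 1) * α + α' = (N : ℝ) * α + (α + α') := by ring
      have h2 := hceil N hNge
      rw [hxval] at h2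
      set x : ℝ := (N : ℝ) * α + (α + α') with hx
      have hcx : ⌈x⌉ = K + 1 := by
        rw [Int.ceil_eq_iff]; push_cast; exact ⟨by linarith, by linarith⟩
      have hcy : ⌈s - x⌉ = -1 - K := by
        rw [Int.ceil_eq_iff]; push_cast; exact ⟨by linarith, by linarith⟩
      rw [hcx, hcy] at h2
      omega
    · exact hne hzero
    · rcases eq_or_lt_of_le hsle with hseq | hslt
      · -- s = 1 : x_N is an integer for all N ≥ N₁, contradicting irrationality
        have hint : ∀ N : ℤ, N₁ ≤ N →
            ((N : ℝ) + 1) * α + α' = (⌈((N : ℝ) + 1) * α + α'⌉ : ℝ) := by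
          intro N hN
          have h2 := hceil N hN
          set x : ℝ := ((N : ℝ) + 1) * α + α' with hx
          have l1 : x ≤ (⌈x⌉ : ℝ) := Int.le_ceil x
          have l2 : s - x ≤ (⌈s - x⌉ : ℝ) := Int.le_ceil _
          have l5 : ((⌈x⌉ + ⌈s - x⌉ : ℤ) : ℝ) = 1 := by rw [h2]; norm_num
          push_cast at l5
          rw [← hseq] at l5
          linarith
        have i1 := hint N₁ (le_refl N₁)
        have i2 := hint (N₁ + 1) (by omega)
        refine hirr.ne_int (⌈(((N₁ + 1 : ℤ) : ℝ) + 1) * α + α'⌉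
            - ⌈((N₁ : ℝ) + 1) * α + α'⌉) ?_
        push_cast at i1 i2 ⊢
        linarith
      · -- 0 < s < 1 : use density with interval (0, s)
        obtain ⟨N, hNge, K, hK1, hK2⟩ :=
          orbit_dense hirr (α + α') 0 s hpos N₁
        have hxval : ((N : ℝ) + 1) * α + α' = (N : ℝ) * α + (α + α') := by ring
        have h2 := hceil N hNge
        rw [hxval] at h2
        set x : ℝ := (N : ℝ) * α + (α + α') with hx
        have hcx : ⌈x⌉ = K + 1 := by
          rw [Int.ceil_eq_iff]; push_cast; exact ⟨by linarith, by linarith⟩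
        have hcy : ⌈s - x⌉ = -K + 1 := by
          rw [Int.ceil_eq_iff]; push_cast; exact ⟨by linarith, by linarith⟩
        rw [hcx, hcy] at h2
        omega
  -- conclude
  have hA0 : 0 ≤ α + α' := by
    have : β' = -α' := by rw [hs] at hs0; linarith
    rw [hβ, this] at hB1
    linarith
  refine ⟨hA0, hA1, hs0, ?_⟩
  -- no integer points
  rintro k hk2 ⟨z, hz⟩
  have hβ' : β' = -α' := by rw [hs] at hs0; linarith
  have hj : (1 : ℤ) ≤ k - 1 := by omega
  have hjmem : (k - 1) ∈ beatty α α' ∪ beatty β β' := by rw [hunion]; exact hj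
  have hja : ((k - 1 : ℤ) : ℝ) * α + α' = (z : ℝ) - α := by push_cast; linarith
  have hjb : ((k - 1 : ℤ) : ℝ) * β + β' = ((k - 1 - z : ℤ) : ℝ) + α := by
    rw [hβ, hβ']; push_cast; nlinarith [hz]
  rcases hjmem with hmem | hmem
  · rw [mem_beatty_iff h0 h1, hja] at hmem
    obtain ⟨h2, h3⟩ := hmem
    have hce : ⌈(z : ℝ) - α⌉ = z := by
      rw [Int.ceil_eq_iff]; push_cast; exact ⟨by linarith, by linarith⟩
    rw [hce] at h3
    linarith
  · rw [mem_beatty_iff hb0 hb1, hjb] at hmem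
    obtain ⟨h2, h3⟩ := hmem
    have hce : ⌈((k - 1 - z : ℤ) : ℝ) + α⌉ = k - z := by
      rw [Int.ceil_eq_iff]; push_cast; exact ⟨by linarith, by linarith⟩
    rw [hce] at h3
    rw [hβ] at h3
    push_cast at h3
    linarith

/-- Fraenkel's Partition Theorem, irrational case. -/
theorem stmt4 (α β α' β' : ℝ) (hirr : Irrational α) (h0 : 0 < α) (h1 : α < 1)
    (hβ : β = 1 - α) :
    TilesN (beatty α α') (beatty β β') ↔
      (0 ≤ α + α' ∧ α + α' ≤ 1 ∧ α' + β' = 0 ∧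
        ∀ k : ℤ, 2 ≤ k → ¬ ∃ z : ℤ, (k : ℝ) * α + α' = (z : ℝ)) := by
  constructor
  · exact forward_dir α β α' β' hirr h0 h1 hβ
  · rintro ⟨hA0, hA1, hsum, hni⟩
    have hβ' : β' = -α' := by linarith
    constructor
    · rw [Set.disjoint_left]
      intro k hka hkb
      rcases le_or_gt k 0 with hk | hk
      · exact (not_mem_of_nonpos h0 h1 hβ hβ' hA0 hA1 hk).1 hka
      · exact (mem_iff_not_mem_of_pos h0 h1 hβ hβ' hA0 hA1 hni (by omega)).mp hka hkb
    · ext k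
      simp only [Set.mem_union, Set.mem_setOf_eq]
      constructor
      · intro hmem
        by_contra hlt
        push_neg at hlt
        have h9 := not_mem_of_nonpos h0 h1 hβ hβ' hA0 hA1 (by omega : k ≤ 0)
        rcases hmem with h | h
        · exact h9.1 h
        · exact h9.2 h
      · intro hk
        by_cases hb : k ∈ beatty β β'
        · exact Or.inr hb
        · exact Or.inl ((mem_iff_not_mem_of_pos h0 h1 hβ hβ' hA0 hA1 hni hk).mpr hb)
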